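/- Fix β>0 and θ,α∈ℝ. For every t>0 and every real λ>−c̃^θ_t, ∫_0^∞ e^{−λz} m^{α,θ}(t,z) q^θ_t(z) dz = (c̃^θ_t/(c̃^θ_t+λ))² · exp(−α u^θ(λ,t)/(c^θ_t)²) = (c̃^θ_t/(c̃^θ_t+λ))² · exp(−αλ/(c^θ_t(c̃^θ_t+λ))). (This identifies the Laplace transform of the one-dimensional marginal of the CSBP under the m^{α,θ}-h-transform, i.e. of the immigrated CSBP Z^α of Proposition prop:Zaq.) -/

import Mathlib

open MeasureTheory Filter

open Set Asymptotics

/-- `c^θ_t` from the paper, with time-scale parameter `β`. -/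
noncomputable def cc (β θ t : ℝ) : ℝ :=
  if θ = 0 then 1 / (β * t) else 2 * θ / (Real.exp (2 * β * θ * t) - 1)

/-- `c̃^θ_t` from the paper. -/
noncomputable def cct (β θ t : ℝ) : ℝ :=
  if θ = 0 then 1 / (β * t) else 2 * θ / (1 - Real.exp (-(2 * β * θ * t)))

/-- `u^θ(λ, t)` from the paper. -/
noncomputable def uu (β θ l t : ℝ) : ℝ :=
  if t = 0 then l else l * cc β θ t / (cct β θ t + l)

/-- entrance density `q^θ_t(x)`. -/
noncomputable def qe (β θ t x : ℝ) : ℝ :=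
  cc β θ t * cct β θ t * Real.exp (-(cct β θ t * x))

/-- transition density `q^θ_t(x, y)`. -/
noncomputable def qt (β θ t x y : ℝ) : ℝ :=
  x * cc β θ t * cct β θ t * Real.exp (-((x + y) * cc β θ t) - 2 * θ * y) *
    ∑' k : ℕ, (x * y * cc β θ t * cct β θ t) ^ k /
      ((Nat.factorial k : ℝ) * (Nat.factorial (k + 1) : ℝ))

/-- the space-time harmonic function `m^{α,θ}(t, z)`. -/
noncomputable def mm (β θ α t z : ℝ) : ℝ :=
  z * Real.exp (-(α / cc β θ t)) *
    ∑' i : ℕ, (α * z) ^ i * Real.exp (((i : ℝ) + 1) * (2 * β * θ * t)) /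
      ((Nat.factorial i : ℝ) * (Nat.factorial (i + 1) : ℝ))

/-- the space-time harmonic function `m̃^{α,θ}(t, z)`. -/
noncomputable def mmt (β θ α t z : ℝ) : ℝ :=
  z * Real.exp (2 * θ * z) * Real.exp (-(α / cct β θ t)) *
    ∑' i : ℕ, (α * z) ^ i * Real.exp (-(((i : ℝ) + 1) * (2 * β * θ * t))) /
      ((Nat.factorial i : ℝ) * (Nat.factorial (i + 1) : ℝ))


lemma integrableOn_pow_exp (n : ℕ) {s : ℝ} (hs : 0 < s) :
    IntegrableOn (fun z : ℝ => z ^ n * Real.exp (-(s * z))) (Set.Ioi 0) := by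
  have hcont : ContinuousOn (fun z : ℝ => z ^ n * Real.exp (-(s * z))) (Set.Ici 0) := by
    fun_prop
  apply integrable_of_isBigO_exp_neg (half_pos hs) hcont
  have h2 : Tendsto (fun x : ℝ => s / 2 * x) atTop atTop :=
    Tendsto.const_mul_atTop (half_pos hs) tendsto_id
  have h3 := (Real.tendsto_pow_mul_exp_neg_atTop_nhds_zero n).comp h2
  have h4 := h3.const_mul ((2 / s) ^ n)
  simp only [Function.comp] at h4
  rw [mul_zero] at h4
  have h : Tendsto (fun x : ℝ => x ^ n * Real.exp (-(s / 2) * x)) atTop (nhds 0) := by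
    refine h4.congr fun x => ?_
    rw [← mul_assoc, ← mul_pow, show (2 / s) * (s / 2 * x) = x from by field_simp, neg_mul]
  have hO := (h.isBigO_one ℝ).mul
    (isBigO_refl (fun x : ℝ => Real.exp (-(s / 2) * x)) atTop)
  refine hO.congr (fun x => ?_) fun x => one_mul _
  rw [mul_assoc, ← Real.exp_add]
  congr 1
  ring

lemma integral_pow_exp (n : ℕ) {s : ℝ} (hs : 0 < s) :
    ∫ z in Set.Ioi (0:ℝ), z ^ n * Real.exp (-(s * z)) = n.factorial / s ^ (n + 1) := by
  have h := Real.integral_rpow_mul_exp_neg_mul_Ioi (a := (n:ℝ) + 1) (r := s) (by positivity) hs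
  rw [show ((n:ℝ) + 1) - 1 = (n:ℝ) by ring] at h
  simp_rw [Real.rpow_natCast] at h
  rw [h, Real.Gamma_nat_eq_factorial,
    show ((n:ℝ) + 1) = ((n + 1 : ℕ) : ℝ) by push_cast; ring, Real.rpow_natCast,
    one_div, inv_pow, inv_mul_eq_div]

noncomputable def coefA (c d α E l : ℝ) (i : ℕ) : ℝ :=
  Real.exp (-(α / c)) * c * d * α ^ i * E ^ (i + 1) /
    ((Nat.factorial i : ℝ) * (Nat.factorial (i + 1) : ℝ))

noncomputable def FF (c d α E l : ℝ) (i : ℕ) (z : ℝ) : ℝ :=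
  coefA c d α E l i * (z ^ (i + 1) * Real.exp (-((d + l) * z)))

lemma main_calc (c d l α E : ℝ) (hc : 0 < c) (hd : 0 < d) (hE : 0 < E)
    (hdE : d = c * E) (hs : 0 < d + l) :
    (∫ z in Set.Ioi (0:ℝ), Real.exp (-(l * z)) *
        (z * Real.exp (-(α / c)) *
          ∑' i : ℕ, (α * z) ^ i * E ^ (i + 1) /
            ((Nat.factorial i : ℝ) * (Nat.factorial (i + 1) : ℝ))) *
        (c * d * Real.exp (-(d * z))))
      = (d / (d + l)) ^ 2 * Real.exp (-(α * l / (c * (d + l)))) := by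
  have hf1 : ∀ i : ℕ, ((Nat.factorial i : ℝ)) ≠ 0 := fun i =>
    Nat.cast_ne_zero.mpr (Nat.factorial_ne_zero i)
  have key : ∀ z : ℝ, Real.exp (-(l * z)) *
      (z * Real.exp (-(α / c)) *
        ∑' i : ℕ, (α * z) ^ i * E ^ (i + 1) /
          ((Nat.factorial i : ℝ) * (Nat.factorial (i + 1) : ℝ))) *
      (c * d * Real.exp (-(d * z))) = ∑' i : ℕ, FF c d α E l i z := by
    intro z
    rw [show Real.exp (-(l * z)) *
        (z * Real.exp (-(α / c)) *
          ∑' i : ℕ, (α * z) ^ i * E ^ (i + 1) /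
            ((Nat.factorial i : ℝ) * (Nat.factorial (i + 1) : ℝ))) *
        (c * d * Real.exp (-(d * z)))
      = (Real.exp (-(l * z)) * z * Real.exp (-(α / c)) * (c * d) * Real.exp (-(d * z))) *
          ∑' i : ℕ, (α * z) ^ i * E ^ (i + 1) /
            ((Nat.factorial i : ℝ) * (Nat.factorial (i + 1) : ℝ)) by ring,
      ← tsum_mul_left]
    refine tsum_congr fun i => ?_
    have hxe : Real.exp (-((d + l) * z)) = Real.exp (-(l * z)) * Real.exp (-(d * z)) := by
      rw [← Real.exp_add]; congr 1; ring
    unfold FF coefA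
    rw [hxe, mul_pow]
    ring
  have hint : ∀ i : ℕ, Integrable (FF c d α E l i) (volume.restrict (Set.Ioi 0)) := fun i =>
    ((integrableOn_pow_exp (i + 1) hs).const_mul (coefA c d α E l i))
  have hval : ∀ i : ℕ, (∫ z in Set.Ioi (0:ℝ), FF c d α E l i z)
      = coefA c d α E l i * ((Nat.factorial (i + 1) : ℝ) / (d + l) ^ (i + 2)) := by
    intro i
    unfold FF
    rw [MeasureTheory.integral_const_mul, integral_pow_exp (i + 1) hs]
  have hnormval : ∀ i : ℕ, (∫ z in Set.Ioi (0:ℝ), ‖FF c d α E l i z‖)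
      = |coefA c d α E l i| * ((Nat.factorial (i + 1) : ℝ) / (d + l) ^ (i + 2)) := by
    intro i
    have h1 : ∀ z ∈ Set.Ioi (0:ℝ), ‖FF c d α E l i z‖
        = |coefA c d α E l i| * (z ^ (i + 1) * Real.exp (-((d + l) * z))) := by
      intro z hz
      have hz0 : (0:ℝ) < z := hz
      rw [show FF c d α E l i z
          = coefA c d α E l i * (z ^ (i + 1) * Real.exp (-((d + l) * z))) from rfl,
        Real.norm_eq_abs, abs_mul, abs_of_nonneg (by positivity :
          (0:ℝ) ≤ z ^ (i + 1) * Real.exp (-((d + l) * z)))]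
    rw [MeasureTheory.setIntegral_congr_fun measurableSet_Ioi h1,
      MeasureTheory.integral_const_mul, integral_pow_exp (i + 1) hs]
  have habs : ∀ i : ℕ, |coefA c d α E l i|
      = Real.exp (-(α / c)) * c * d * |α| ^ i * E ^ (i + 1) /
        ((Nat.factorial i : ℝ) * (Nat.factorial (i + 1) : ℝ)) := by
    intro i
    unfold coefA
    rw [abs_div, abs_mul, abs_mul, abs_mul, abs_mul, abs_pow, abs_pow,
      abs_of_pos (Real.exp_pos _), abs_of_pos hc, abs_of_pos hd, abs_of_pos hE,
      abs_of_nonneg (by positivity : (0:ℝ) ≤ (Nat.factorial i : ℝ) * (Nat.factorial (i + 1) : ℝ))]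
  have hsummable : Summable fun i : ℕ => ∫ z in Set.Ioi (0:ℝ), ‖FF c d α E l i z‖ := by
    have heq : ∀ i : ℕ, (∫ z in Set.Ioi (0:ℝ), ‖FF c d α E l i z‖)
        = (Real.exp (-(α / c)) * c * d * E / (d + l) ^ 2) *
          ((|α| * E / (d + l)) ^ i / (Nat.factorial i : ℝ)) := by
      intro i
      rw [hnormval i, habs i]
      rw [div_pow, mul_pow]
      field_simp
      ring
    rw [funext heq]
    exact (Real.summable_pow_div_factorial (|α| * E / (d + l))).mul_left _
  rw [MeasureTheory.setIntegral_congr_fun measurableSet_Ioi (fun z _ => key z),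
    ← (MeasureTheory.hasSum_integral_of_summable_integral_norm hint hsummable).tsum_eq]
  have hterm : ∀ i : ℕ, (∫ z in Set.Ioi (0:ℝ), FF c d α E l i z)
      = (Real.exp (-(α / c)) * c * d * E / (d + l) ^ 2) *
        ((α * E / (d + l)) ^ i / (Nat.factorial i : ℝ)) := by
    intro i
    rw [hval i]
    unfold coefA
    rw [div_pow, mul_pow]
    field_simp
    ring
  rw [tsum_congr hterm, tsum_mul_left,
    show (∑' i : ℕ, (α * E / (d + l)) ^ i / (Nat.factorial i : ℝ)) = Real.exp (α * E / (d + l)) by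
      rw [Real.exp_eq_exp_ℝ, NormedSpace.exp_eq_tsum_div]]
  have hcomb : Real.exp (-(α / c)) * Real.exp (α * E / (d + l)) =
      Real.exp (-(α * l / (c * (d + l)))) := by
    rw [← Real.exp_add]
    congr 1
    have hEe : E = d / c := by rw [hdE]; field_simp
    rw [hEe]
    field_simp
    ring
  have hce : c * E = d := hdE.symm
  have h0 : c * E + l ≠ 0 := by rw [hce]; exact hs.ne'
  have final : ∀ X Y : ℝ, X * c * d * E / (d + l) ^ 2 * Y = (d / (d + l)) ^ 2 * (X * Y) := by
    intro X Y
    rw [← hce]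
    field_simp
  rw [final, hcomb]

lemma cc_pos {β θ t : ℝ} (hβ : 0 < β) (ht : 0 < t) : 0 < cc β θ t := by
  unfold cc
  rcases eq_or_ne θ 0 with h | h
  · rw [if_pos h]; positivity
  · rw [if_neg h]
    rcases h.lt_or_gt with h' | h'
    · apply div_pos_of_neg_of_neg (by linarith)
      have hx : 2 * β * θ * t < 0 := by nlinarith [mul_pos (mul_pos hβ ht) (neg_pos.mpr h')]
      have := Real.exp_lt_one_iff.mpr hx
      linarith
    · apply div_pos (by linarith)
      have hx : (0:ℝ) < 2 * β * θ * t := by positivity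
      have := Real.one_lt_exp_iff.mpr hx
      linarith

lemma cct_eq {β θ t : ℝ} (hβ : 0 < β) (ht : 0 < t) :
    cct β θ t = cc β θ t * Real.exp (2 * β * θ * t) := by
  unfold cc cct
  rcases eq_or_ne θ 0 with h | h
  · simp [h]
  · rw [if_neg h, if_neg h]
    have hx : 2 * β * θ * t ≠ 0 :=
      mul_ne_zero (mul_ne_zero (mul_ne_zero two_ne_zero hβ.ne') h) ht.ne'
    have h1 : Real.exp (2 * β * θ * t) - 1 ≠ 0 := by
      rw [sub_ne_zero]; simp [Real.exp_eq_one_iff, hx]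
    have h2 : 1 - Real.exp (-(2 * β * θ * t)) ≠ 0 := by
      rw [sub_ne_zero]
      intro hh
      exact (mul_ne_zero (mul_ne_zero (mul_ne_zero (neg_ne_zero.mpr two_ne_zero) hβ.ne') h)
        ht.ne') (by simpa [Real.exp_eq_one_iff] using hh.symm)
    have he : Real.exp (2 * β * θ * t) ≠ 0 := (Real.exp_pos _).ne'
    rw [Real.exp_neg] at h2 ⊢
    field_simp

/-- Laplace transform of the one-dimensional marginal of the CSBP under the
`m^{α,θ}`-h-transform: for `t > 0` and `λ > -c̃^θ_t`,
`∫_0^∞ e^{-λz} m^{α,θ}(t,z) q^θ_t(z) dz = (c̃^θ_t/(c̃^θ_t+λ))² exp(-α u^θ(λ,t)/(c^θ_t)²)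
  = (c̃^θ_t/(c̃^θ_t+λ))² exp(-αλ/(c^θ_t (c̃^θ_t+λ)))`. -/
theorem mm_transform_laplace (β θ α : ℝ) (hβ : 0 < β) (t : ℝ) (ht : 0 < t)
    (l : ℝ) (hl : -cct β θ t < l) :
    (∫ z in Set.Ioi (0 : ℝ), Real.exp (-(l * z)) * mm β θ α t z * qe β θ t z)
      = (cct β θ t / (cct β θ t + l)) ^ 2 *
          Real.exp (-(α * uu β θ l t / (cc β θ t) ^ 2)) ∧
    (cct β θ t / (cct β θ t + l)) ^ 2 * Real.exp (-(α * uu β θ l t / (cc β θ t) ^ 2))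
      = (cct β θ t / (cct β θ t + l)) ^ 2 *
          Real.exp (-(α * l / (cc β θ t * (cct β θ t + l)))) := by

  have hc : 0 < cc β θ t := cc_pos hβ ht
  have hdE : cct β θ t = cc β θ t * Real.exp (2 * β * θ * t) := cct_eq hβ ht
  have hd : 0 < cct β θ t := by rw [hdE]; positivity
  have hs : 0 < cct β θ t + l := by linarith
  have harg : α * uu β θ l t / (cc β θ t) ^ 2 = α * l / (cc β θ t * (cct β θ t + l)) := by
    unfold uu
    rw [if_neg ht.ne']
    field_simp
  refine ⟨?_, by rw [harg]⟩
  rw [harg]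
  have hmm : ∀ z : ℝ, Real.exp (-(l * z)) * mm β θ α t z * qe β θ t z
      = Real.exp (-(l * z)) *
        (z * Real.exp (-(α / cc β θ t)) *
          ∑' i : ℕ, (α * z) ^ i * Real.exp (2 * β * θ * t) ^ (i + 1) /
            ((Nat.factorial i : ℝ) * (Nat.factorial (i + 1) : ℝ))) *
        (cc β θ t * cct β θ t * Real.exp (-(cct β θ t * z))) := by
    intro z
    unfold mm qe
    have hT : (∑' i : ℕ, (α * z) ^ i * Real.exp (((i:ℝ) + 1) * (2 * β * θ * t)) /
          ((Nat.factorial i : ℝ) * (Nat.factorial (i + 1) : ℝ)))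
        = ∑' i : ℕ, (α * z) ^ i * Real.exp (2 * β * θ * t) ^ (i + 1) /
          ((Nat.factorial i : ℝ) * (Nat.factorial (i + 1) : ℝ)) :=
      tsum_congr fun i => by
        rw [show ((i:ℝ) + 1) * (2 * β * θ * t) = ((i + 1 : ℕ) : ℝ) * (2 * β * θ * t) by
          push_cast; ring, Real.exp_nat_mul]
    rw [hT]
  rw [MeasureTheory.setIntegral_congr_fun measurableSet_Ioi fun z _ => hmm z]
  exact main_calc (cc β θ t) (cct β θ t) l α (Real.exp (2 * β * θ * t)) hc hd
    (Real.exp_pos _) hdE hs
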